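/- The expected number G_{d,n} of generators of the record-setting region after n i.i.d. uniform observations in dimension d satisfies G_{d,n} = Σ_{k=0}^d C(d,k) I_{k,n}, where I_{k,n} is the expected number of interior generators in dimension k after n observations (with I_{0,n} = 1 if n = 0 and 0 otherwise). -/
import Mathlib

open MeasureTheory Set

/-- The record-setting region of the points `X 0, …, X (n-1)` within `[0,1)^d`. -/
def recordSet {d n : ℕ} (X : Fin n → Fin d → ℝ) : Set (Fin d → ℝ) :=
  {x | (∀ j, x j ∈ Set.Ico (0:ℝ) 1) ∧ ∀ i, ¬ ∀ j, x j < X i j}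

/-- The generators: minimal elements of the record-setting region. -/
def generators {d n : ℕ} (X : Fin n → Fin d → ℝ) : Set (Fin d → ℝ) :=
  {g | g ∈ recordSet X ∧ ∀ y ∈ recordSet X, y ≤ g → y = g}

/-- The interior generators: generators with all coordinates nonzero. -/
def interiorGenerators {d n : ℕ} (X : Fin n → Fin d → ℝ) : Set (Fin d → ℝ) :=
  {g | g ∈ generators X ∧ ∀ j, g j ≠ 0}


/-- The canonical model for `n` i.i.d. observations uniform on `[0,1)^d`:
Lebesgue measure restricted to the cube `[0,1)^{n·d}`. -/
noncomputable def expInteriorGens (d n : ℕ) : ℝ :=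
  ∫ X in {X : Fin n → Fin d → ℝ | ∀ i j, X i j ∈ Set.Ico (0:ℝ) 1},
    ((interiorGenerators X).ncard : ℝ)

/-- Expected total number of generators after `n` uniform observations in dimension `d`. -/
noncomputable def expGens (d n : ℕ) : ℝ :=
  ∫ X in {X : Fin n → Fin d → ℝ | ∀ i j, X i j ∈ Set.Ico (0:ℝ) 1},
    ((generators X).ncard : ℝ)

namespace RecGen

variable {d n m : ℕ}

lemma generators_char (X : Fin n → Fin d → ℝ) (g : Fin d → ℝ) :
    g ∈ generators X ↔ g ∈ recordSet X ∧
      ∀ j, g j ≠ 0 → ∃ i, (∀ j', j' ≠ j → g j' < X i j') ∧ g j = X i j := by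
  classical
  constructor
  · rintro ⟨hg, hmin⟩
    refine ⟨hg, fun j hj => ?_⟩
    set B : Finset ℝ := insert 0 ((Finset.univ.image fun i => X i j).filter (· < g j)) with hB
    have hBne : B.Nonempty := ⟨0, Finset.mem_insert_self _ _⟩
    set t := B.max' hBne with ht
    have hgj0 : 0 < g j := lt_of_le_of_ne (hg.1 j).1 (Ne.symm hj)
    have htlt : t < g j := by
      apply Finset.max'_lt_iff B hBne |>.2
      intro b hb
      rcases Finset.mem_insert.1 hb with rfl | hb
      · exact hgj0
      · exact (Finset.mem_filter.1 hb).2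
    have htnonneg : 0 ≤ t := Finset.le_max' _ _ (Finset.mem_insert_self _ _)
    set z := Function.update g j t with hz
    have hzle : z ≤ g := by
      intro j'
      by_cases h : j' = j
      · subst h; simp [hz, htlt.le]
      · simp [hz, Function.update_of_ne h]
    have hzne : z ≠ g := by
      intro h
      have := congrFun h j
      simp [hz] at this
      exact absurd this (ne_of_lt htlt)
    have hzcube : ∀ j', z j' ∈ Set.Ico (0:ℝ) 1 := by
      intro j'
      by_cases h : j' = j
      · simp only [hz, h, Function.update_self]
        exact ⟨htnonneg, lt_trans htlt (hg.1 j).2⟩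
      · simp only [hz, Function.update_of_ne h]; exact hg.1 j'
    have hz_not : z ∉ recordSet X := fun h => hzne (hmin z h hzle)
    have hex : ∃ i, ∀ j', z j' < X i j' := by
      by_contra hcon
      push_neg at hcon
      exact hz_not ⟨hzcube, fun i hi => by obtain ⟨j', hj'⟩ := hcon i; exact absurd (hi j') (not_lt.2 hj')⟩
    obtain ⟨i, hi⟩ := hex
    have hne : ∀ j', j' ≠ j → g j' < X i j' := by
      intro j' hj'
      have := hi j'
      rwa [hz, Function.update_of_ne hj'] at this
    refine ⟨i, hne, ?_⟩
    have h1 : t < X i j := by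
      have := hi j; rwa [hz, Function.update_self] at this
    have h2 : ¬ X i j < g j := by
      intro hlt
      have hmem : X i j ∈ B := by
        refine Finset.mem_insert_of_mem (Finset.mem_filter.2 ⟨?_, hlt⟩)
        exact Finset.mem_image.2 ⟨i, Finset.mem_univ _, rfl⟩
      exact absurd (Finset.le_max' B _ hmem) (not_le.2 h1)
    have h3 : ¬ g j < X i j := by
      intro hlt
      exact hg.2 i (fun j' => by
        by_cases h : j' = j
        · subst h; exact hlt
        · exact hne j' h)
    linarith [not_lt.1 h2, not_lt.1 h3]
  · rintro ⟨hg, hchar⟩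
    refine ⟨hg, fun y hy hyle => ?_⟩
    by_contra hne
    obtain ⟨j, hj⟩ : ∃ j, y j ≠ g j := by
      by_contra h; push_neg at h; exact hne (funext h)
    have hylt : y j < g j := lt_of_le_of_ne (hyle j) hj
    have hgj : g j ≠ 0 := (lt_of_le_of_lt (hy.1 j).1 hylt).ne'
    obtain ⟨i, hlt, heq⟩ := hchar j hgj
    exact hy.2 i (fun j' => by
      by_cases h : j' = j
      · subst h; exact lt_of_lt_of_le hylt (le_of_eq heq)
      · exact lt_of_le_of_lt (hyle j') (hlt j' h))

end RecGen
namespace RecGen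

variable {d n m : ℕ}

lemma generators_coords {X : Fin n → Fin d → ℝ} {g : Fin d → ℝ}
    (hg : g ∈ generators X) (j : Fin d) : g j = 0 ∨ ∃ i, g j = X i j := by
  rcases eq_or_ne (g j) 0 with h | h
  · exact Or.inl h
  · obtain ⟨i, -, heq⟩ := ((generators_char X g).1 hg).2 j h
    exact Or.inr ⟨i, heq⟩

lemma generators_finite (X : Fin n → Fin d → ℝ) : (generators X).Finite := by
  classical
  apply Set.Finite.subset (Set.finite_range
    (fun σ : Fin d → Option (Fin n) => fun j => (σ j).elim 0 fun i => X i j))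
  intro g hg
  refine ⟨fun j => if h : g j = 0 then none else some (((generators_coords hg j).resolve_left h).choose), ?_⟩
  funext j
  by_cases h : g j = 0
  · simp [h]
  · simp only [h, dif_neg, not_false_iff, Option.elim_some]
    exact (((generators_coords hg j).resolve_left h).choose_spec).symm

lemma interior_coords {X : Fin n → Fin d → ℝ} {g : Fin d → ℝ}
    (hg : g ∈ interiorGenerators X) (j : Fin d) : ∃ i, g j = X i j :=
  (generators_coords hg.1 j).resolve_left (by simpa using hg.2 j)

section Proj

variable {e : Fin m → Fin d} (he : Function.Injective e) {T : Finset (Fin d)}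
  (hT : ∀ j, j ∈ T ↔ ∃ j', e j' = j) {X : Fin n → Fin d → ℝ} (hX : ∀ i j, 0 < X i j)

/-- extension by zero -/
noncomputable def extE (e : Fin m → Fin d) (y : Fin m → ℝ) : Fin d → ℝ :=
  Function.extend e y (fun _ => (0:ℝ))

include he in
lemma extE_apply (y : Fin m → ℝ) (j' : Fin m) : extE e y (e j') = y j' :=
  he.extend_apply y _ j'

lemma extE_apply' (y : Fin m → ℝ) {j : Fin d} (hj : ¬ ∃ j', e j' = j) : extE e y j = 0 :=
  Function.extend_apply' y _ j hj

include he hT hX in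
lemma toInterior {g : Fin d → ℝ} (hg : g ∈ generators X) (hsupp : ∀ j, g j ≠ 0 ↔ j ∈ T) :
    (g ∘ e) ∈ interiorGenerators (fun i => X i ∘ e) := by
  obtain ⟨hgr, hgmin⟩ := hg
  refine ⟨⟨⟨fun j' => hgr.1 (e j'), fun i hi => ?_⟩, ?_⟩, fun j' => ?_⟩
  · -- record condition
    refine hgr.2 i (fun j => ?_)
    rcases eq_or_ne (g j) 0 with h0 | h0
    · rw [h0]; exact hX i j
    · obtain ⟨j', rfl⟩ := (hT j).1 ((hsupp j).1 h0)
      exact hi j'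
  · -- minimality
    intro w hw hwle
    set z := extE e w with hz
    have hze : ∀ j', z (e j') = w j' := fun j' => extE_apply he w j'
    have hzle : z ≤ g := by
      intro j
      by_cases h : ∃ j', e j' = j
      · obtain ⟨j', rfl⟩ := h; rw [hze]; exact hwle j'
      · rw [hz, extE_apply' w h]; exact (hgr.1 j).1
    have hzr : z ∈ recordSet X := by
      refine ⟨fun j => ?_, fun i hi => ?_⟩
      · by_cases h : ∃ j', e j' = j
        · obtain ⟨j', rfl⟩ := h; rw [hze]; exact hw.1 j'
        · rw [hz, extE_apply' w h]; exact ⟨le_refl _, one_pos⟩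
      · exact hw.2 i (fun j' => by rw [← hze j']; exact hi (e j'))
    have := hgmin z hzr hzle
    funext j'
    rw [← hze j', this]; rfl
  · -- nonzero
    exact (hsupp (e j')).2 ((hT (e j')).2 ⟨j', rfl⟩)

include he hT hX in
lemma ofInterior {y : Fin m → ℝ} (hy : y ∈ interiorGenerators (fun i => X i ∘ e)) :
    extE e y ∈ generators X ∧ (∀ j, extE e y j ≠ 0 ↔ j ∈ T) ∧ (extE e y) ∘ e = y := by
  obtain ⟨⟨hyr, hymin⟩, hynz⟩ := hy
  set g := extE e y with hg
  have hge : ∀ j', g (e j') = y j' := fun j' => extE_apply he y j'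
  have hgcube : ∀ j, g j ∈ Set.Ico (0:ℝ) 1 := by
    intro j
    by_cases h : ∃ j', e j' = j
    · obtain ⟨j', rfl⟩ := h; rw [hge]; exact hyr.1 j'
    · rw [hg, extE_apply' y h]; exact ⟨le_refl _, one_pos⟩
  have hgr : g ∈ recordSet X := by
    refine ⟨hgcube, fun i hi => ?_⟩
    exact hyr.2 i (fun j' => by rw [← hge j']; exact hi (e j'))
  refine ⟨⟨hgr, ?_⟩, fun j => ?_, funext hge⟩
  · intro z hz hzle
    set w := z ∘ e with hw
    have hwle : w ≤ y := fun j' => by rw [← hge j']; exact hzle (e j')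
    have hz0 : ∀ j, (¬ ∃ j', e j' = j) → z j = 0 := by
      intro j hj
      have h1 : z j ≤ g j := hzle j
      rw [hg, extE_apply' y hj] at h1
      exact le_antisymm h1 (hz.1 j).1
    have hwr : w ∈ recordSet (fun i => X i ∘ e) := by
      refine ⟨fun j' => hz.1 (e j'), fun i hi => ?_⟩
      refine hz.2 i (fun j => ?_)
      by_cases h : ∃ j', e j' = j
      · obtain ⟨j', rfl⟩ := h; exact hi j'
      · rw [hz0 j h]; exact hX i j
    have hwy := hymin w hwr hwle
    funext j
    by_cases h : ∃ j', e j' = j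
    · obtain ⟨j', rfl⟩ := h
      rw [hge, ← hwy]; rfl
    · rw [hz0 j h, hg, extE_apply' y h]
  · constructor
    · intro hne
      by_contra hjT
      refine hne (extE_apply' y (fun h => hjT ((hT j).2 h)))
    · intro hjT
      obtain ⟨j', rfl⟩ := (hT j).1 hjT
      rw [hge]; exact hynz j'

end Proj

end RecGen
namespace RecGen

variable {d n : ℕ}

lemma ncard_generators_eq_sum (X : Fin n → Fin d → ℝ) (hX : ∀ i j, 0 < X i j) :
    (generators X).ncard
      = ∑ T : Finset (Fin d),
          (interiorGenerators (fun i => X i ∘ ⇑(T.orderEmbOfFin rfl))).ncard := by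
  classical
  have hfin := generators_finite X
  set G : Finset (Fin d → ℝ) := hfin.toFinset with hG
  have h1 : (generators X).ncard = G.card := by
    rw [← Set.ncard_coe_finset, hG, hfin.coe_toFinset]
  rw [h1, Finset.card_eq_sum_card_fiberwise
    (f := fun g => (Finset.univ.filter fun j => g j ≠ 0)) (t := Finset.univ)
    (fun x _ => Finset.mem_univ _)]
  refine Finset.sum_congr rfl fun T _ => ?_
  set e : Fin T.card → Fin d := ⇑(T.orderEmbOfFin rfl) with hee
  have he : Function.Injective e := (T.orderEmbOfFin rfl).injective
  have hT : ∀ j, j ∈ T ↔ ∃ j', e j' = j := by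
    intro j
    constructor
    · intro hj
      have : j ∈ Set.range e := by
        rw [hee, Finset.range_orderEmbOfFin T rfl]; exact hj
      exact this
    · rintro ⟨j', rfl⟩
      exact Finset.orderEmbOfFin_mem T rfl j'
  have himg : interiorGenerators (fun i => X i ∘ e)
      = (fun g => g ∘ e) '' {g | g ∈ generators X ∧ ∀ j, g j ≠ 0 ↔ j ∈ T} := by
    ext y
    constructor
    · intro hy
      obtain ⟨hgen, hs, hcomp⟩ := ofInterior he hT hX hy
      exact ⟨extE e y, ⟨hgen, hs⟩, hcomp⟩
    · rintro ⟨g, ⟨hg, hs⟩, rfl⟩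
      exact toInterior he hT hX hg hs
  have hinj : Set.InjOn (fun g => g ∘ e) {g | g ∈ generators X ∧ ∀ j, g j ≠ 0 ↔ j ∈ T} := by
    rintro g1 ⟨-, hs1⟩ g2 ⟨-, hs2⟩ hgg
    funext j
    by_cases h : j ∈ T
    · obtain ⟨j', rfl⟩ := (hT j).1 h
      exact congrFun hgg j'
    · have h1 : g1 j = 0 := by by_contra hne; exact h ((hs1 j).1 hne)
      have h2 : g2 j = 0 := by by_contra hne; exact h ((hs2 j).1 hne)
      rw [h1, h2]
  have hset : {g | g ∈ generators X ∧ ∀ j, g j ≠ 0 ↔ j ∈ T}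
      = ↑(G.filter fun g => (Finset.univ.filter fun j => g j ≠ 0) = T) := by
    ext g
    simp only [Finset.coe_filter, Set.mem_setOf_eq, hG, Set.Finite.mem_toFinset]
    constructor
    · rintro ⟨hg, hs⟩
      refine ⟨hg, ?_⟩
      ext j; simp [hs j]
    · rintro ⟨hg, hs⟩
      refine ⟨hg, fun j => ?_⟩
      rw [← hs]; simp
  rw [himg, Set.ncard_image_of_injOn hinj, hset, Set.ncard_coe_finset]

end RecGen
namespace RecGen

variable {d n : ℕ}

lemma mem_interior_iff (X : Fin n → Fin d → ℝ) (g : Fin d → ℝ) :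
    g ∈ interiorGenerators X ↔
      (∀ j, 0 ≤ g j ∧ g j < 1) ∧ (∀ i, ∃ j, X i j ≤ g j) ∧
      (∀ j, g j = 0 ∨ ∃ i, (∀ j', j' = j ∨ g j' < X i j') ∧ g j = X i j) ∧
      (∀ j, ¬ g j = 0) := by
  constructor
  · rintro ⟨hg, hnz⟩
    obtain ⟨⟨hcube, hrec⟩, hchar⟩ := (generators_char X g).1 hg
    refine ⟨fun j => hcube j, fun i => ?_, fun j => ?_, hnz⟩
    · have := hrec i; push_neg at this; exact this
    · obtain ⟨i, h1, h2⟩ := hchar j (hnz j)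
      exact Or.inr ⟨i, fun j' => by
        by_cases h : j' = j
        · exact Or.inl h
        · exact Or.inr (h1 j' h), h2⟩
  · rintro ⟨hcube, hrec, hchar, hnz⟩
    refine ⟨(generators_char X g).2 ⟨⟨hcube, fun i hi => ?_⟩, fun j hj => ?_⟩, hnz⟩
    · obtain ⟨j, hle⟩ := hrec i
      exact absurd (hi j) (not_lt.2 hle)
    · rcases hchar j with h0 | ⟨i, h1, h2⟩
      · exact absurd h0 hj
      · exact ⟨i, fun j' hj' => (h1 j').resolve_left hj', h2⟩

/-- candidate generator from a choice of indices -/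
def genOf (X : Fin n → Fin d → ℝ) (σ : Fin d → Fin n) : Fin d → ℝ := fun j => X (σ j) j

open Classical in
/-- A measurable formula computing the number of interior generators. -/
noncomputable def countFun (d n : ℕ) (X : Fin n → Fin d → ℝ) : ℝ :=
  ∑ σ : Fin d → Fin n,
    if genOf X σ ∈ interiorGenerators X then
      ((Finset.univ.filter fun σ' : Fin d → Fin n => genOf X σ' = genOf X σ).card : ℝ)⁻¹
    else 0

lemma countFun_eq (X : Fin n → Fin d → ℝ) :
    countFun d n X = ((interiorGenerators X).ncard : ℝ) := by
  classical
  set A : Finset (Fin d → Fin n) :=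
    Finset.univ.filter (fun σ => genOf X σ ∈ interiorGenerators X) with hA
  set B : Finset (Fin d → ℝ) := A.image (genOf X) with hB
  have hSB : interiorGenerators X = ↑B := by
    ext g
    constructor
    · intro hg
      have hc : ∀ j, ∃ i, g j = X i j := interior_coords hg
      refine Finset.mem_coe.2 (Finset.mem_image.2
        ⟨fun j => (hc j).choose, ?_, ?_⟩)
      · have : genOf X (fun j => (hc j).choose) = g :=
          funext fun j => ((hc j).choose_spec).symm
        rw [hA, Finset.mem_filter, this]; exact ⟨Finset.mem_univ _, hg⟩
      · exact funext fun j => ((hc j).choose_spec).symm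
    · intro hg
      obtain ⟨σ, hσ, rfl⟩ := Finset.mem_image.1 (Finset.mem_coe.1 hg)
      exact (Finset.mem_filter.1 hσ).2
  have hcard : (interiorGenerators X).ncard = B.card := by
    rw [hSB, Set.ncard_coe_finset]
  rw [hcard, countFun]
  rw [← Finset.sum_filter, ← hA]
  have hfib : ∀ σ ∈ A, (Finset.univ.filter fun σ' => genOf X σ' = genOf X σ)
      = A.filter (fun σ' => genOf X σ' = genOf X σ) := by
    intro σ hσ
    ext σ'
    simp only [Finset.mem_filter, Finset.mem_univ, true_and, hA]
    exact ⟨fun h => ⟨h ▸ (Finset.mem_filter.1 hσ).2, h⟩, fun h => h.2⟩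
  rw [Finset.sum_congr rfl (fun σ hσ => by rw [hfib σ hσ])]
  rw [← Finset.sum_fiberwise_of_maps_to (g := genOf X) (t := B)
    (fun σ hσ => Finset.mem_image_of_mem _ hσ)]
  rw [Finset.card_eq_sum_ones B, Nat.cast_sum]
  refine Finset.sum_congr rfl fun b hb => ?_
  have hfibb : ∀ σ' ∈ A.filter (fun σ => genOf X σ = b),
      A.filter (fun σ'' => genOf X σ'' = genOf X σ') = A.filter (fun σ'' => genOf X σ'' = b) := by
    intro σ' hσ'
    have : genOf X σ' = b := (Finset.mem_filter.1 hσ').2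
    rw [this]
  rw [Finset.sum_congr rfl (fun σ' hσ' => by rw [hfibb σ' hσ'])]
  rw [Finset.sum_const]
  have hne : (A.filter (fun σ'' => genOf X σ'' = b)).card ≠ 0 := by
    obtain ⟨σ₀, hσ₀, hgen⟩ := Finset.mem_image.1 hb
    exact Finset.card_ne_zero_of_mem (Finset.mem_filter.2 ⟨hσ₀, hgen⟩)
  rw [nsmul_eq_mul, mul_inv_cancel₀ (Nat.cast_ne_zero.2 hne)]
  norm_num

lemma countFun_nonneg (X : Fin n → Fin d → ℝ) : 0 ≤ countFun d n X := by
  rw [countFun_eq]; positivity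

lemma countFun_le (X : Fin n → Fin d → ℝ) :
    countFun d n X ≤ (Fintype.card (Fin d → Fin n) : ℝ) := by
  classical
  rw [countFun_eq]
  have h : (interiorGenerators X).ncard ≤ Fintype.card (Fin d → Fin n) := by
    have hsub : interiorGenerators X ⊆ Set.range (genOf X) := by
      intro g hg
      have hc : ∀ j, ∃ i, g j = X i j := interior_coords hg
      exact ⟨fun j => (hc j).choose, funext fun j => ((hc j).choose_spec).symm⟩
    calc (interiorGenerators X).ncard ≤ (Set.range (genOf X)).ncard :=
          Set.ncard_le_ncard hsub (Set.finite_range _)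
      _ ≤ _ := by
          rw [← Set.image_univ]
          calc ((genOf X) '' Set.univ).ncard ≤ Set.univ.ncard := Set.ncard_image_le (Set.finite_univ)
            _ = _ := by rw [Set.ncard_univ, Nat.card_eq_fintype_card]
  exact_mod_cast h

end RecGen
namespace RecGen

variable {d n : ℕ}

lemma measurable_eval (i : Fin n) (j : Fin d) :
    Measurable fun X : Fin n → Fin d → ℝ => X i j :=
  (measurable_pi_apply j).comp (measurable_pi_apply i)

lemma measurableSet_mem_interior (σ : Fin d → Fin n) :
    MeasurableSet {X : Fin n → Fin d → ℝ | genOf X σ ∈ interiorGenerators X} := by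
  have hs : {X : Fin n → Fin d → ℝ | genOf X σ ∈ interiorGenerators X} =
      ((⋂ j, ({X : Fin n → Fin d → ℝ | 0 ≤ X (σ j) j} ∩ {X | X (σ j) j < 1})) ∩
       (⋂ i, ⋃ j, {X | X i j ≤ X (σ j) j}) ∩
       (⋂ j, ({X | X (σ j) j = 0} ∪
         ⋃ i, ((⋂ j', ({X : Fin n → Fin d → ℝ | j' = j} ∪ {X | X (σ j') j' < X i j'})) ∩
           {X | X (σ j) j = X i j}))) ∩
       (⋂ j, {X | X (σ j) j = 0}ᶜ)) := by
    ext X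
    simp only [mem_interior_iff, genOf, Set.mem_inter_iff, Set.mem_iInter, Set.mem_iUnion,
      Set.mem_union, Set.mem_setOf_eq, Set.mem_compl_iff]
    tauto
  rw [hs]
  refine MeasurableSet.inter (MeasurableSet.inter (MeasurableSet.inter ?_ ?_) ?_) ?_
  · exact MeasurableSet.iInter fun j =>
      ((measurableSet_le measurable_const (measurable_eval _ _)).inter
        (measurableSet_lt (measurable_eval _ _) measurable_const))
  · exact MeasurableSet.iInter fun i => MeasurableSet.iUnion fun j =>
      measurableSet_le (measurable_eval _ _) (measurable_eval _ _)
  · refine MeasurableSet.iInter fun j => MeasurableSet.union ?_ ?_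
    · exact measurableSet_eq_fun (measurable_eval _ _) measurable_const
    · refine MeasurableSet.iUnion fun i => MeasurableSet.inter ?_ ?_
      · exact MeasurableSet.iInter fun j' =>
          (MeasurableSet.const _).union (measurableSet_lt (measurable_eval _ _) (measurable_eval _ _))
      · exact measurableSet_eq_fun (measurable_eval _ _) (measurable_eval _ _)
  · exact MeasurableSet.iInter fun j =>
      (measurableSet_eq_fun (measurable_eval _ _) measurable_const).compl

lemma measurable_countFun : Measurable (countFun d n) := by
  classical
  unfold countFun
  refine Finset.measurable_sum _ fun σ _ => ?_
  refine Measurable.ite (measurableSet_mem_interior σ) ?_ measurable_const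
  have h : (fun X : Fin n → Fin d → ℝ =>
        ((Finset.univ.filter fun σ' : Fin d → Fin n => genOf X σ' = genOf X σ).card : ℝ)⁻¹)
      = fun X => (∑ σ' : Fin d → Fin n, if genOf X σ' = genOf X σ then (1:ℝ) else 0)⁻¹ := by
    funext X
    congr 1
    rw [Finset.card_filter]
    push_cast
    rfl
  rw [h]
  refine Measurable.inv ?_
  refine Finset.measurable_sum _ fun σ' _ => ?_
  refine Measurable.ite ?_ measurable_const measurable_const
  have h2 : {X : Fin n → Fin d → ℝ | genOf X σ' = genOf X σ}
      = ⋂ j, {X | X (σ' j) j = X (σ j) j} := by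
    ext X; simp [genOf, funext_iff]
  rw [h2]
  exact MeasurableSet.iInter fun j =>
    measurableSet_eq_fun (measurable_eval _ _) (measurable_eval _ _)

end RecGen
namespace RecGen

variable {d n : ℕ}

/-- Uniform measure on `[0,1)`. -/
noncomputable def nu : Measure ℝ := volume.restrict (Set.Ico 0 1)

instance : IsProbabilityMeasure nu := ⟨by simp [nu, Real.volume_Ico]⟩

/-- The law of `n` i.i.d. uniform observations in `[0,1)^d`. -/
noncomputable def P (d n : ℕ) : Measure (Fin n → Fin d → ℝ) :=
  Measure.pi fun _ : Fin n => Measure.pi fun _ : Fin d => nu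

instance (d n : ℕ) : IsProbabilityMeasure (P d n) :=
  Measure.pi.instIsProbabilityMeasure _

lemma restrict_pi_pi {ι : Type*} [Fintype ι] {α : ι → Type*} [∀ i, MeasurableSpace (α i)]
    (μ : ∀ i, Measure (α i)) [∀ i, SigmaFinite (μ i)]
    (s : ∀ i, Set (α i)) (hs : ∀ i, MeasurableSet (s i)) :
    (Measure.pi μ).restrict (Set.pi Set.univ s) = Measure.pi (fun i => (μ i).restrict (s i)) := by
  refine (Measure.pi_eq fun t ht => ?_).symm
  rw [Measure.restrict_apply (MeasurableSet.univ_pi ht), ← Set.pi_inter_distrib,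
    Measure.pi_pi]
  exact Finset.prod_congr rfl fun i _ => (Measure.restrict_apply (ht i)).symm

lemma cube_eq (d n : ℕ) : {X : Fin n → Fin d → ℝ | ∀ i j, X i j ∈ Set.Ico (0:ℝ) 1}
    = Set.pi Set.univ (fun _ : Fin n => Set.pi Set.univ fun _ : Fin d => Set.Ico (0:ℝ) 1) := by
  ext X; simp [Set.mem_pi]

lemma volume_restrict_cube (d n : ℕ) :
    (volume : Measure (Fin n → Fin d → ℝ)).restrict
        {X | ∀ i j, X i j ∈ Set.Ico (0:ℝ) 1} = P d n := by
  have hinner : (volume : Measure (Fin d → ℝ)).restrict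
      (Set.pi Set.univ fun _ : Fin d => Set.Ico (0:ℝ) 1) = Measure.pi fun _ : Fin d => nu := by
    rw [volume_pi, restrict_pi_pi _ _ (fun _ => measurableSet_Ico)]
    rfl
  rw [cube_eq, volume_pi, restrict_pi_pi _ _ (fun _ => MeasurableSet.univ_pi
    (fun _ => measurableSet_Ico))]
  unfold P
  simp only [hinner]

lemma measurable_comp_e {m : ℕ} (e : Fin m → Fin d) :
    Measurable fun g : Fin d → ℝ => g ∘ e :=
  measurable_pi_lambda _ fun j => measurable_pi_apply (e j)

lemma map_comp_inner {m : ℕ} (e : Fin m → Fin d) (he : Function.Injective e) :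
    (Measure.pi fun _ : Fin d => nu).map (fun g : Fin d → ℝ => g ∘ e)
      = Measure.pi fun _ : Fin m => nu := by
  classical
  refine (Measure.pi_eq fun s hs => ?_).symm
  rw [Measure.map_apply (measurable_comp_e e) (MeasurableSet.univ_pi hs)]
  have hpre : (fun g : Fin d → ℝ => g ∘ e) ⁻¹' (Set.pi Set.univ s)
      = Set.pi Set.univ (fun j' => ⋂ j, ⋂ (_ : e j = j'), s j) := by
    ext g
    simp only [Set.mem_preimage, Set.mem_univ_pi, Set.mem_iInter, Function.comp_apply]
    constructor
    · intro h j' j hj; subst hj; exact h j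
    · intro h j; exact h (e j) j rfl
  rw [hpre, Measure.pi_pi]
  have ht1 : ∀ j, (⋂ j'', ⋂ (_ : e j'' = e j), s j'') = s j := by
    intro j
    ext x
    simp only [Set.mem_iInter]
    exact ⟨fun h => h j rfl, fun h j'' hj'' => he hj'' ▸ h⟩
  have ht2 : ∀ j', j' ∉ Finset.univ.image e → (⋂ j, ⋂ (_ : e j = j'), s j) = Set.univ := by
    intro j' hj'
    ext x
    simp only [Set.mem_iInter, Set.mem_univ, iff_true]
    intro j hj
    exact absurd (Finset.mem_image_of_mem e (Finset.mem_univ j)) (hj ▸ hj')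
  calc ∏ j' : Fin d, nu (⋂ j, ⋂ (_ : e j = j'), s j)
      = ∏ j' ∈ Finset.univ.image e, nu (⋂ j, ⋂ (_ : e j = j'), s j) :=
        (Finset.prod_subset (Finset.subset_univ _)
          (fun x _ hx => by rw [ht2 x hx]; exact measure_univ)).symm
    _ = ∏ j : Fin m, nu (⋂ j'', ⋂ (_ : e j'' = e j), s j'') :=
        Finset.prod_image (fun x _ y _ h => he h)
    _ = ∏ j : Fin m, nu (s j) := by
        exact Finset.prod_congr rfl fun j _ => by rw [ht1 j]

end RecGen
namespace RecGen

variable {d n : ℕ}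

lemma measurable_proj {m : ℕ} (e : Fin m → Fin d) :
    Measurable fun X : Fin n → Fin d → ℝ => fun i => X i ∘ e :=
  measurable_pi_lambda _ fun i => (measurable_comp_e e).comp (measurable_pi_apply i)

lemma map_proj {m : ℕ} (e : Fin m → Fin d) (he : Function.Injective e) :
    (P d n).map (fun X : Fin n → Fin d → ℝ => fun i => X i ∘ e) = P m n := by
  refine (Measure.pi_eq fun s hs => ?_).symm
  rw [Measure.map_apply (measurable_proj e) (MeasurableSet.univ_pi hs)]
  have hpre : (fun X : Fin n → Fin d → ℝ => fun i => X i ∘ e) ⁻¹' (Set.pi Set.univ s)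
      = Set.pi Set.univ (fun i => (fun g : Fin d → ℝ => g ∘ e) ⁻¹' s i) := by
    ext X
    simp [Set.mem_univ_pi]
  rw [hpre, P, Measure.pi_pi]
  refine Finset.prod_congr rfl fun i _ => ?_
  rw [← Measure.map_apply (measurable_comp_e e) (hs i), map_comp_inner e he]

lemma ae_pos (d n : ℕ) : ∀ᵐ X ∂(P d n), ∀ i j, 0 < X i j := by
  rw [ae_all_iff]
  intro i
  rw [ae_all_iff]
  intro j
  rw [ae_iff]
  refine measure_mono_null (fun X hX => ?_)
    (?_ : P d n (Set.pi Set.univ fun i' =>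
      if i' = i then {f : Fin d → ℝ | f j ≤ 0} else Set.univ) = 0)
  · simp only [Set.mem_univ_pi]
    intro i'
    by_cases h : i' = i
    · subst h; simp only [if_pos rfl, Set.mem_setOf_eq]
      exact not_lt.1 hX
    · simp [h]
  · rw [P, Measure.pi_pi]
    refine Finset.prod_eq_zero (Finset.mem_univ i) ?_
    rw [if_pos rfl]
    have hsub : {f : Fin d → ℝ | f j ≤ 0}
        ⊆ Set.pi Set.univ fun j' => if j' = j then Set.Iic (0:ℝ) else Set.univ := by
      intro f hf
      simp only [Set.mem_univ_pi]
      intro j'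
      by_cases h : j' = j
      · subst h; rw [if_pos rfl]; simpa using hf
      · simp [h]
    refine measure_mono_null hsub ?_
    rw [Measure.pi_pi]
    refine Finset.prod_eq_zero (Finset.mem_univ j) ?_
    rw [if_pos rfl]
    have h1 : Set.Iic (0:ℝ) ∩ Set.Ico 0 1 = {0} := by
      ext x
      simp only [Set.mem_inter_iff, Set.mem_Iic, Set.mem_Ico, Set.mem_singleton_iff]
      constructor
      · rintro ⟨ha, hb, hc⟩; linarith
      · rintro rfl; norm_num
    show nu (Set.Iic 0) = 0
    rw [nu, Measure.restrict_apply measurableSet_Iic, h1]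
    exact measure_singleton 0

lemma integrable_countFun_comp {m : ℕ} (e : Fin m → Fin d) :
    Integrable (fun X : Fin n → Fin d → ℝ => countFun m n (fun i => X i ∘ e)) (P d n) := by
  refine ⟨((measurable_countFun).comp (measurable_proj e)).aestronglyMeasurable, ?_⟩
  refine HasFiniteIntegral.of_bounded (C := (Fintype.card (Fin m → Fin n) : ℝ))
    (ae_of_all _ fun X => ?_)
  rw [Real.norm_eq_abs, abs_of_nonneg (countFun_nonneg _)]
  exact countFun_le _

end RecGen
open RecGen in
theorem expected_generators_sum (d n : ℕ) :
    expGens d n = ∑ k ∈ Finset.range (d + 1), (d.choose k : ℝ) * expInteriorGens k n := by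
  classical
  have hI : ∀ m : ℕ, expInteriorGens m n = ∫ X, countFun m n X ∂(P m n) := by
    intro m
    rw [expInteriorGens, volume_restrict_cube]
    exact integral_congr_ae (ae_of_all _ fun X => (countFun_eq X).symm)
  have hG : expGens d n = ∫ X, ((generators X).ncard : ℝ) ∂(P d n) := by
    rw [expGens, volume_restrict_cube]
  have hae : (fun X => ((generators X).ncard : ℝ)) =ᵐ[P d n]
      fun X => ∑ T : Finset (Fin d),
        countFun T.card n (fun i => X i ∘ ⇑(T.orderEmbOfFin rfl)) := by
    filter_upwards [ae_pos d n] with X hX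
    rw [ncard_generators_eq_sum X hX]
    push_cast
    exact Finset.sum_congr rfl fun T _ => (countFun_eq _).symm
  rw [hG, integral_congr_ae hae,
    integral_finset_sum _ (fun T _ => integrable_countFun_comp _)]
  have hterm : ∀ T : Finset (Fin d),
      (∫ X, countFun T.card n (fun i => X i ∘ ⇑(T.orderEmbOfFin rfl)) ∂(P d n))
        = expInteriorGens T.card n := by
    intro T
    rw [hI T.card, ← map_proj _ (T.orderEmbOfFin rfl).injective,
      integral_map (measurable_proj _).aemeasurable
        (measurable_countFun).aestronglyMeasurable]
  rw [Finset.sum_congr rfl fun T _ => hterm T]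
  rw [← Finset.powerset_univ]
  rw [Finset.sum_powerset_apply_card (f := fun k => expInteriorGens k n)]
  simp [Finset.card_univ, nsmul_eq_mul]
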